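/- Let D be a finite abelian group with a ℚ/ℤ-valued quadratic form whose associated bilinear pairing is non-degenerate, and let H, I be two subgroups of D. Then the quotients H/(H ∩ I^⊥) and I/(I ∩ H^⊥) have the same cardinality, where X^⊥ denotes the set of elements pairing trivially with X. -/

import Mathlib

noncomputable section DiscAux

open AddCircle

/-- The natural map `ℚ/ℤ → ℝ/ℤ`. -/
def ratCircleHom : AddCircle (1 : ℚ) →+ AddCircle (1 : ℝ) :=
  QuotientAddGroup.map _ _ (Rat.castHom ℝ).toAddMonoidHom (by
    intro x hx
    obtain ⟨n, hn⟩ := AddSubgroup.mem_zmultiples_iff.mp hx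
    refine AddSubgroup.mem_comap.mpr (AddSubgroup.mem_zmultiples_iff.mpr ⟨n, ?_⟩)
    rw [← hn]
    push_cast
    simp)

lemma ratCircleHom_mk (r : ℚ) : ratCircleHom (r : AddCircle (1 : ℚ)) = ((r : ℝ) : AddCircle (1 : ℝ)) := rfl

lemma ratCircleHom_injective : Function.Injective ratCircleHom := by
  rw [injective_iff_map_eq_zero]
  intro a ha
  induction a using QuotientAddGroup.induction_on with
  | H r =>
    rw [ratCircleHom_mk, AddCircle.coe_eq_zero_iff] at ha
    obtain ⟨n, hn⟩ := ha
    have hr : r = (n : ℚ) := by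
      have h2 : (n : ℝ) = (r : ℝ) := by simpa using hn
      exact_mod_cast h2.symm
    rw [hr, AddCircle.coe_eq_zero_iff]
    exact ⟨n, by simp⟩

/-- The embedding of `Hom(G, ℚ/ℤ)` into complex characters of `G`. -/
def toChar (G : Type*) [AddCommGroup G] (φ : G →+ AddCircle (1 : ℚ)) : AddChar G ℂ where
  toFun g := (AddCircle.toCircle (ratCircleHom (φ g)) : ℂ)
  map_zero_eq_one' := by simp
  map_add_eq_mul' a c := by
    show (AddCircle.toCircle (ratCircleHom (φ (a + c))) : ℂ) = _
    rw [map_add, map_add, AddCircle.toCircle_add]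
    push_cast
    ring

lemma toChar_injective (G : Type*) [AddCommGroup G] : Function.Injective (toChar G) := by
  intro φ ψ h
  ext g
  have h1 : (AddCircle.toCircle (ratCircleHom (φ g)) : ℂ) =
      (AddCircle.toCircle (ratCircleHom (ψ g)) : ℂ) := DFunLike.congr_fun h g
  exact ratCircleHom_injective
    (AddCircle.injective_toCircle one_ne_zero (Subtype.val_injective h1))

lemma dual_finite (G : Type*) [AddCommGroup G] [Finite G] :
    Finite (G →+ AddCircle (1 : ℚ)) := by
  cases nonempty_fintype G
  exact Finite.of_injective _ (toChar_injective G)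

lemma dual_card_le (G : Type*) [AddCommGroup G] [Finite G] :
    Nat.card (G →+ AddCircle (1 : ℚ)) ≤ Nat.card G := by
  cases nonempty_fintype G
  calc Nat.card (G →+ AddCircle (1 : ℚ)) ≤ Nat.card (AddChar G ℂ) :=
        Nat.card_le_card_of_injective _ (toChar_injective G)
    _ = Nat.card G := by
        simp [Nat.card_eq_fintype_card]

section Main

variable {D : Type*} [AddCommGroup D] [Finite D]
  (b : D → D → AddCircle (1 : ℚ))

lemma b_zero_left (hadd : ∀ x y z : D, b (x + y) z = b x z + b y z) (x : D) :
    b 0 x = 0 := by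
  have h := hadd 0 0 x
  rw [add_zero] at h
  exact (left_eq_add.mp h)

lemma b_neg_left (hadd : ∀ x y z : D, b (x + y) z = b x z + b y z) (x y : D) :
    b (-x) y = - b x y := by
  have h := hadd x (-x) y
  rw [add_neg_cancel, b_zero_left b hadd] at h
  exact (neg_eq_of_add_eq_zero_right h.symm).symm

/-- The orthogonal complement of a subgroup. -/
def perp (hadd : ∀ x y z : D, b (x + y) z = b x z + b y z) (A : AddSubgroup D) :
    AddSubgroup D where
  carrier := {y | ∀ x ∈ A, b y x = 0}
  zero_mem' := fun x _ => b_zero_left b hadd x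
  add_mem' := by
    intro y z hy hz x hx
    rw [hadd, hy x hx, hz x hx, add_zero]
  neg_mem' := by
    intro y hy x hx
    rw [b_neg_left b hadd, hy x hx, neg_zero]

lemma key (hadd : ∀ x y z : D, b (x + y) z = b x z + b y z)
    (hsymm : ∀ x y : D, b x y = b y x) (A C : AddSubgroup D) :
    Nat.card A * Nat.card {y : D | y ∈ C ∧ ∀ x ∈ A, b y x = 0} ≤
      Nat.card C * Nat.card {y : D | y ∈ A ∧ ∀ x ∈ C, b y x = 0} := by
  have haddr : ∀ x y z : D, b x (y + z) = b x y + b x z := by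
    intro x y z
    rw [hsymm, hadd, hsymm y x, hsymm z x]
  set K : AddSubgroup C := (perp b hadd A).addSubgroupOf C with hK
  -- the homomorphism `A → Hom(C/K, ℚ/ℤ)`
  let f : A → (C →+ AddCircle (1 : ℚ)) := fun a =>
    AddMonoidHom.mk' (fun c : C => b a c) (fun c c' => haddr a c c')
  have hf0 : ∀ a : A, ∀ c ∈ K, f a c = 0 := by
    intro a c hc
    have : ∀ x ∈ A, b (c : D) x = 0 := hc
    rw [show f a c = b (a : D) (c : D) from rfl, hsymm]
    exact this a a.2
  let Φ : A →+ ((C ⧸ K) →+ AddCircle (1 : ℚ)) :=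
    AddMonoidHom.mk' (fun a => QuotientAddGroup.lift K (f a) (hf0 a)) (by
      intro a a'
      refine AddMonoidHom.ext fun x => ?_
      refine QuotientAddGroup.induction_on x fun c => ?_
      show b ((a : D) + (a' : D)) (c : D) = b (a : D) (c : D) + b (a' : D) (c : D)
      exact hadd _ _ _)
  have hker : ∀ a : A, a ∈ Φ.ker ↔ ∀ x ∈ C, b (a : D) x = 0 := by
    intro a
    constructor
    · intro h x hx
      have h0 : Φ a = 0 := h
      have := DFunLike.congr_fun h0 (QuotientAddGroup.mk (⟨x, hx⟩ : C))
      exact this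
    · intro h
      show Φ a = 0
      refine AddMonoidHom.ext fun x => ?_
      refine QuotientAddGroup.induction_on x fun c => ?_
      exact h (c : D) c.2
  -- identify the two sets with `K` and `Φ.ker`
  have e1 : Nat.card {y : D | y ∈ C ∧ ∀ x ∈ A, b y x = 0} = Nat.card K := by
    refine Nat.card_congr (Equiv.symm ⟨fun c => ⟨(c : D), c.1.2, c.2⟩,
      fun y => ⟨⟨y.1, y.2.1⟩, y.2.2⟩, fun _ => rfl, fun _ => rfl⟩)
  have e2 : Nat.card {y : D | y ∈ A ∧ ∀ x ∈ C, b y x = 0} = Nat.card Φ.ker := by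
    refine Nat.card_congr (Equiv.symm ⟨fun a => ⟨(a : D), a.1.2, (hker a.1).mp a.2⟩,
      fun y => ⟨⟨y.1, y.2.1⟩, (hker _).mpr y.2.2⟩, fun _ => rfl, fun _ => rfl⟩)
  have hA : Nat.card A = Nat.card (A ⧸ Φ.ker) * Nat.card Φ.ker :=
    AddSubgroup.card_eq_card_quotient_mul_card_addSubgroup _
  have hC : Nat.card C = Nat.card (C ⧸ K) * Nat.card K :=
    AddSubgroup.card_eq_card_quotient_mul_card_addSubgroup _
  have hquot : Nat.card (A ⧸ Φ.ker) ≤ Nat.card (C ⧸ K) := by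
    haveI : Finite ((C ⧸ K) →+ AddCircle (1 : ℚ)) := dual_finite _
    calc Nat.card (A ⧸ Φ.ker) = Nat.card Φ.range :=
          Nat.card_congr (QuotientAddGroup.quotientKerEquivRange Φ).toEquiv
      _ ≤ Nat.card ((C ⧸ K) →+ AddCircle (1 : ℚ)) :=
          Nat.card_le_card_of_injective _ Subtype.val_injective
      _ ≤ Nat.card (C ⧸ K) := dual_card_le _
  calc Nat.card A * Nat.card {y : D | y ∈ C ∧ ∀ x ∈ A, b y x = 0}
      = (Nat.card (A ⧸ Φ.ker) * Nat.card Φ.ker) * Nat.card K := by rw [← hA, e1]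
    _ ≤ (Nat.card (C ⧸ K) * Nat.card Φ.ker) * Nat.card K := by
        exact Nat.mul_le_mul_right _ (Nat.mul_le_mul_right _ hquot)
    _ = (Nat.card (C ⧸ K) * Nat.card K) * Nat.card Φ.ker := by ring
    _ = Nat.card C * Nat.card {y : D | y ∈ A ∧ ∀ x ∈ C, b y x = 0} := by rw [← hC, e2]

end Main

end DiscAux

/-- Let `D` be a discriminant form: a finite abelian group with a `ℚ/ℤ`-valued
quadratic form `q` whose associated bilinear pairing
`b x y = q(x+y) - q x - q y` is non-degenerate.  For two subgroups `H`, `I` of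
`D`, the quotients `H/(H ∩ I^⊥)` and `I/(I ∩ H^⊥)` have the same cardinality;
equivalently (all groups being finite),
`|H| · |I ∩ H^⊥| = |I| · |H ∩ I^⊥|`. -/
theorem discriminant_form_quotient_cardinalities
    (D : Type*) [AddCommGroup D] [Finite D]
    (q : D → AddCircle (1 : ℚ))
    (b : D → D → AddCircle (1 : ℚ))
    (hbq : ∀ x y : D, b x y = q (x + y) - q x - q y)
    (hadd : ∀ x y z : D, b (x + y) z = b x z + b y z)
    (hsymm : ∀ x y : D, b x y = b y x)
    (hnd : ∀ x : D, (∀ y : D, b x y = 0) → x = 0)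
    (H I : AddSubgroup D) :
    Nat.card H * Nat.card {y : D | y ∈ I ∧ ∀ x ∈ H, b y x = 0} =
      Nat.card I * Nat.card {y : D | y ∈ H ∧ ∀ x ∈ I, b y x = 0} := by
  exact le_antisymm (key b hadd hsymm H I) (key b hadd hsymm I H)
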